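/- Let A₁₂ = αe₁₂ + βe₂₃ + γe₂₄ and A₂₁ = α₁e₁₂ + β₁e₂₃ + γ₁e₂₄ be 4×4 complex matrices (α, β, γ, α₁, β₁, γ₁ ∈ ℂ). If A₁₂A₂₁ = A₂₁A₁₂ and A₁₂A₂₁ ≠ 0, then there exists a nonzero ε ∈ ℂ with A₂₁ = ε·A₁₂. -/

import Mathlib

/-- The 4×4 matrix unit `e_{ij}` (indices `0,…,3`). -/
def e (i j : Fin 4) : Matrix (Fin 4) (Fin 4) ℂ := Matrix.single i j 1

/-- if `A₁₂ = αe₁₂ + βe₂₃ + γe₂₄` and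
`A₂₁ = α₁e₁₂ + β₁e₂₃ + γ₁e₂₄` commute and their product is nonzero, then
`A₂₁ = ε • A₁₂` for some nonzero `ε`. -/
theorem proportional_of_commuting_case1 (α β γ α₁ β₁ γ₁ : ℂ)
    (hcomm : (α • e 0 1 + β • e 1 2 + γ • e 1 3) * (α₁ • e 0 1 + β₁ • e 1 2 + γ₁ • e 1 3) =
      (α₁ • e 0 1 + β₁ • e 1 2 + γ₁ • e 1 3) * (α • e 0 1 + β • e 1 2 + γ • e 1 3))
    (hne : (α • e 0 1 + β • e 1 2 + γ • e 1 3) * (α₁ • e 0 1 + β₁ • e 1 2 + γ₁ • e 1 3) ≠ 0) :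
    ∃ ε : ℂ, ε ≠ 0 ∧
      α₁ • e 0 1 + β₁ • e 1 2 + γ₁ • e 1 3 = ε • (α • e 0 1 + β • e 1 2 + γ • e 1 3) := by
  have h1 : α * β₁ = α₁ * β := by
    have := congrFun (congrFun hcomm 0) 2
    simpa [e, Matrix.mul_apply, Matrix.single, Matrix.add_apply, Fin.sum_univ_four]
      using this
  have h2 : α * γ₁ = α₁ * γ := by
    have := congrFun (congrFun hcomm 0) 3
    simpa [e, Matrix.mul_apply, Matrix.single, Matrix.add_apply, Fin.sum_univ_four]
      using this
  have hprod : ¬ (α * β₁ = 0 ∧ α * γ₁ = 0) := by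
    intro ⟨hb, hg⟩
    apply hne
    ext i j
    fin_cases i <;> fin_cases j <;>
      simp [e, Matrix.mul_apply, Matrix.single, Matrix.add_apply, Fin.sum_univ_four] <;>
      try ring_nf
    · simpa using hb
    · simpa using hg
  have hα : α ≠ 0 := by
    intro h; exact hprod ⟨by simp [h], by simp [h]⟩
  have hα₁ : α₁ ≠ 0 := by
    intro h
    rw [h] at h1 h2
    simp at h1 h2
    exact hprod ⟨by rcases h1 with h | h <;> simp [h], by rcases h2 with h | h <;> simp [h]⟩
  refine ⟨α₁ / α, div_ne_zero hα₁ hα, ?_⟩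
  have hb : β₁ = α₁ / α * β := by field_simp; linear_combination h1
  have hg : γ₁ = α₁ / α * γ := by field_simp; linear_combination h2
  have ha : α₁ = α₁ / α * α := by field_simp
  rw [smul_add, smul_add, smul_smul, smul_smul, smul_smul, ← ha, ← hb, ← hg]
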